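/- Let a : ℤ → ℂ^{r×r} be a finitely supported mask and v : ℤ → ℂ^{1×r} finitely supported with v̂(0) ≠ 0, and m ∈ ℕ. If there exists a finitely supported scalar sequence c : ℤ → ℂ with ĉ(0) = 1 such that v̂(2ξ)â(ξ) = ĉ(ξ)v̂(ξ) + O(|ξ|^{m+1}) and v̂(2ξ)â(ξ+π) = O(|ξ|^{m+1}) as ξ → 0, then there exists a finitely supported scalar sequence d with d̂(0) = 1 such that υ defined by υ̂(ξ) := d̂(ξ)v̂(ξ) satisfies the order m+1 sum rule conditions υ̂(2ξ)â(ξ) = υ̂(ξ) + O(|ξ|^{m+1}) and υ̂(2ξ)â(ξ+π) = O(|ξ|^{m+1}) as ξ → 0. -/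

import Mathlib

open Complex Polynomial

/-- Symbol (Fourier series) of a scalar sequence. -/
noncomputable def symb (u : ℤ → ℂ) (ξ : ℂ) : ℂ :=
  ∑ᶠ k : ℤ, u k * Complex.exp (-Complex.I * k * ξ)

/-- Entrywise symbol of a matrix-valued sequence. -/
noncomputable def symbM {r : ℕ} (a : ℤ → Fin r → Fin r → ℂ) (i ℓ : Fin r) (ξ : ℂ) : ℂ :=
  ∑ᶠ k : ℤ, a k i ℓ * Complex.exp (-Complex.I * k * ξ)

open scoped ContDiff

theorem symb_eq (u : ℤ → ℂ) (s : Finset ℤ) (hs : Function.support u ⊆ ↑s) :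
    (fun ξ : ℂ => ∑ᶠ k : ℤ, u k * Complex.exp (-Complex.I * k * ξ)) =
      fun ξ => ∑ k ∈ s, u k * Complex.exp (-Complex.I * k * ξ) := by
  funext ξ
  apply finsum_eq_sum_of_support_subset
  intro k hk
  apply hs
  simp only [Function.mem_support] at hk ⊢
  exact fun h => hk (by simp [h])

theorem contDiff_expsum {α : Type*} (s : Finset α) (F W : α → ℂ) :
    ContDiff ℂ ∞ (fun ξ : ℂ => ∑ k ∈ s, F k * Complex.exp (W k * ξ)) :=
  ContDiff.sum fun k _ =>
    contDiff_const.mul (Complex.contDiff_exp.comp (contDiff_const.mul contDiff_id))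

theorem itd_add {f g : ℂ → ℂ} (hf : ContDiff ℂ ∞ f) (hg : ContDiff ℂ ∞ g) (n : ℕ) (x : ℂ) :
    iteratedDeriv n (fun ξ => f ξ + g ξ) x = iteratedDeriv n f x + iteratedDeriv n g x := by
  simp only [← iteratedDerivWithin_univ]
  exact iteratedDerivWithin_add (Set.mem_univ x) uniqueDiffOn_univ
    ((hf.of_le (by exact_mod_cast le_top)).contDiffWithinAt) ((hg.of_le (by exact_mod_cast le_top)).contDiffWithinAt)

theorem itd_sub {f g : ℂ → ℂ} (hf : ContDiff ℂ ∞ f) (hg : ContDiff ℂ ∞ g) (n : ℕ) (x : ℂ) :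
    iteratedDeriv n (fun ξ => f ξ - g ξ) x = iteratedDeriv n f x - iteratedDeriv n g x := by
  simp only [← iteratedDerivWithin_univ]
  exact iteratedDerivWithin_sub (Set.mem_univ x) uniqueDiffOn_univ
    ((hf.of_le (by exact_mod_cast le_top)).contDiffWithinAt) ((hg.of_le (by exact_mod_cast le_top)).contDiffWithinAt)

theorem itd_sum {α : Type*} (s : Finset α) (f : α → ℂ → ℂ) (hf : ∀ k ∈ s, ContDiff ℂ ∞ (f k))
    (n : ℕ) (x : ℂ) :
    iteratedDeriv n (fun ξ => ∑ k ∈ s, f k ξ) x = ∑ k ∈ s, iteratedDeriv n (f k) x := by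
  classical
  induction s using Finset.induction with
  | empty => simp [iteratedDeriv_eq_iteratedFDeriv, iteratedFDeriv_zero_fun]
  | insert _ _ hnm ih =>
    rename_i b t
    rw [Finset.sum_insert hnm]
    have : (fun ξ => ∑ k ∈ insert b t, f k ξ) = fun ξ => f b ξ + ∑ k ∈ t, f k ξ := by
      funext ξ; rw [Finset.sum_insert hnm]
    rw [this, itd_add (hf b (Finset.mem_insert_self b t))
      (ContDiff.sum fun k hk => hf k (Finset.mem_insert_of_mem hk)) n x,
      ih (fun k hk => hf k (Finset.mem_insert_of_mem hk))]

theorem itd_exp_term (A w : ℂ) (n : ℕ) (x : ℂ) :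
    iteratedDeriv n (fun ξ => A * Complex.exp (w * ξ)) x = A * (w ^ n * Complex.exp (w * x)) := by
  have hce : ContDiffOn ℂ n (fun ξ : ℂ => Complex.exp (w * ξ)) Set.univ :=
    (Complex.contDiff_exp.comp (contDiff_const.mul contDiff_id)).contDiffOn
  rw [← iteratedDerivWithin_univ,
    iteratedDerivWithin_const_mul (Set.mem_univ x) uniqueDiffOn_univ A (hce.contDiffWithinAt (Set.mem_univ x)),
    iteratedDerivWithin_univ]
  rw [congrFun (iteratedDeriv_cexp_const_mul n w) x]

theorem itd_expsum {α : Type*} (s : Finset α) (F W : α → ℂ) (n : ℕ) (x : ℂ) :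
    iteratedDeriv n (fun ξ => ∑ k ∈ s, F k * Complex.exp (W k * ξ)) x =
      ∑ k ∈ s, F k * (W k ^ n * Complex.exp (W k * x)) := by
  rw [itd_sum s (fun k ξ => F k * Complex.exp (W k * ξ))
    (fun k _ => contDiff_const.mul (Complex.contDiff_exp.comp (contDiff_const.mul contDiff_id))) n x]
  exact Finset.sum_congr rfl fun k _ => itd_exp_term (F k) (W k) n x

theorem pascal_sum (F G : ℕ → ℂ) (n : ℕ) :
    ∑ k ∈ Finset.range (n + 1), (n.choose k : ℂ) * (F (k + 1) * G (n - k)) +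
      ∑ k ∈ Finset.range (n + 1), (n.choose k : ℂ) * (F k * G (n - k + 1)) =
    ∑ k ∈ Finset.range (n + 2), ((n + 1).choose k : ℂ) * (F k * G (n + 1 - k)) := by
  rw [Finset.sum_range_succ' (fun k => ((n + 1).choose k : ℂ) * (F k * G (n + 1 - k))) (n + 1)]
  have e1 : ∀ k ∈ Finset.range (n + 1),
      ((n + 1).choose (k + 1) : ℂ) * (F (k + 1) * G (n + 1 - (k + 1))) =
        (n.choose k : ℂ) * (F (k + 1) * G (n - k)) +
          (n.choose (k + 1) : ℂ) * (F (k + 1) * G (n - k)) := by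
    intro k hk
    have : n + 1 - (k + 1) = n - k := by omega
    rw [this, Nat.choose_succ_succ]
    push_cast
    ring
  rw [Finset.sum_congr rfl e1, Finset.sum_add_distrib]
  have e2 : ∑ k ∈ Finset.range (n + 1), (n.choose (k + 1) : ℂ) * (F (k + 1) * G (n - k)) =
      ∑ k ∈ Finset.range n, (n.choose (k + 1) : ℂ) * (F (k + 1) * G (n - k)) := by
    rw [Finset.sum_range_succ]
    simp [Nat.choose_succ_self]
  have e3 : ∑ k ∈ Finset.range (n + 1), (n.choose k : ℂ) * (F k * G (n - k + 1)) =
      ∑ k ∈ Finset.range n, (n.choose (k + 1) : ℂ) * (F (k + 1) * G (n - k)) +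
        (n.choose 0 : ℂ) * (F 0 * G (n - 0 + 1)) := by
    rw [Finset.sum_range_succ' (fun k => (n.choose k : ℂ) * (F k * G (n - k + 1))) n]
    congr 1
    refine Finset.sum_congr rfl fun k hk => ?_
    have : n - (k + 1) + 1 = n - k := by
      have := Finset.mem_range.mp hk; omega
    rw [this]
  rw [e2, e3]
  have : n - 0 + 1 = n + 1 - 0 := by omega
  rw [this]
  simp only [Nat.choose_zero_right, Nat.cast_one]
  ring

theorem itd_mul {f g : ℂ → ℂ} (hf : ContDiff ℂ ∞ f) (hg : ContDiff ℂ ∞ g) (n : ℕ) (x : ℂ) :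
    iteratedDeriv n (fun ξ => f ξ * g ξ) x =
      ∑ k ∈ Finset.range (n + 1), (n.choose k : ℂ) *
        (iteratedDeriv k f x * iteratedDeriv (n - k) g x) := by
  induction n generalizing f g with
  | zero => simp
  | succ n ih =>
    have hdf : ContDiff ℂ ∞ (deriv f) := (contDiff_infty_iff_deriv.mp hf).2
    have hdg : ContDiff ℂ ∞ (deriv g) := (contDiff_infty_iff_deriv.mp hg).2
    have hder : deriv (fun ξ => f ξ * g ξ) = fun ξ => deriv f ξ * g ξ + f ξ * deriv g ξ := by
      funext y
      exact deriv_mul ((hf.differentiable (by simp)).differentiableAt)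
        ((hg.differentiable (by simp)).differentiableAt)
    rw [iteratedDeriv_succ', hder,
      itd_add (hdf.mul hg) (hf.mul hdg) n x, ih hdf hg, ih hf hdg]
    have r1 : ∀ k, iteratedDeriv k (deriv f) x = iteratedDeriv (k + 1) f x := fun k =>
      (congrFun (iteratedDeriv_succ' (n := k) (f := f)) x).symm
    have r2 : ∀ k, iteratedDeriv k (deriv g) x = iteratedDeriv (k + 1) g x := fun k =>
      (congrFun (iteratedDeriv_succ' (n := k) (f := g)) x).symm
    simp_rw [r1, r2]
    have := pascal_sum (fun k => iteratedDeriv k f x) (fun k => iteratedDeriv k g x) n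
    simpa [Nat.sub_add_comm] using this

noncomputable def Djet (C : ℕ → ℂ) : ℕ → ℂ
  | 0 => 1
  | (n + 1) =>
    (∑ k ∈ (Finset.range (n + 1)).attach,
      (((n + 1).choose (k : ℕ) : ℂ) * 2 ^ (k : ℕ) * Djet C k * C (n + 1 - (k : ℕ)))) /
      (1 - 2 ^ (n + 1))
  decreasing_by exact Finset.mem_range.mp k.2

theorem two_pow_ne_one (n : ℕ) (hn : n ≠ 0) : (2 : ℂ) ^ n ≠ 1 := by
  intro h
  have h2 : ((2 ^ n : ℕ) : ℂ) = ((1 : ℕ) : ℂ) := by push_cast; simpa using h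
  have h4 := Nat.cast_inj (R := ℂ) |>.mp h2
  have h3 : 2 ^ n ≥ 2 ^ 1 := Nat.pow_le_pow_right (by norm_num) (by omega)
  omega

theorem Djet_spec (C : ℕ → ℂ) (hC0 : C 0 = 1) (n : ℕ) :
    ∑ k ∈ Finset.range (n + 1), (n.choose k : ℂ) * 2 ^ k * Djet C k * C (n - k) = Djet C n := by
  cases n with
  | zero => simp [Djet, hC0]
  | succ n =>
    have hdef : Djet C (n + 1) =
        (∑ k ∈ Finset.range (n + 1),
          (((n + 1).choose k : ℂ) * 2 ^ k * Djet C k * C (n + 1 - k))) / (1 - 2 ^ (n + 1)) := by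
      rw [Djet]
      congr 1
      rw [← Finset.sum_attach (Finset.range (n + 1))
        (fun k => ((n + 1).choose k : ℂ) * 2 ^ k * Djet C k * C (n + 1 - k))]
    have h2 : (1 : ℂ) - 2 ^ (n + 1) ≠ 0 := by
      intro h
      exact two_pow_ne_one (n + 1) (by omega) (by linear_combination -h)
    rw [eq_div_iff h2] at hdef
    rw [Finset.sum_range_succ]
    simp only [Nat.choose_self, Nat.cast_one, Nat.sub_self, hC0]
    linear_combination -hdef

theorem symb_eq' (u : ℤ → ℂ) (s : Finset ℤ) (hs : Function.support u ⊆ ↑s) :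
    symb u = fun ξ => ∑ k ∈ s, u k * Complex.exp (-Complex.I * k * ξ) :=
  symb_eq u s hs

theorem contDiff_symb (u : ℤ → ℂ) (s : Finset ℤ) (hs : Function.support u ⊆ ↑s) :
    ContDiff ℂ ∞ (symb u) := by
  rw [symb_eq' u s hs]
  exact contDiff_expsum s u (fun k => -Complex.I * (k : ℂ))

theorem itd_symb (u : ℤ → ℂ) (s : Finset ℤ) (hs : Function.support u ⊆ ↑s) (n : ℕ) (x : ℂ) :
    iteratedDeriv n (symb u) x =
      ∑ k ∈ s, u k * ((-Complex.I * (k : ℂ)) ^ n * Complex.exp (-Complex.I * k * x)) := by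
  rw [symb_eq' u s hs]
  exact itd_expsum s u (fun k => -Complex.I * (k : ℂ)) n x

theorem exists_jet (m : ℕ) (T : ℕ → ℂ) :
    ∃ d : ℤ → ℂ, (Function.support d).Finite ∧
      ∀ j ≤ m, iteratedDeriv j (symb d) 0 = T j := by
  classical
  set x : Fin (m + 1) → ℂ := fun k => -Complex.I * ((k : ℤ) : ℂ) with hxdef
  have hxinj : Function.Injective x := by
    intro k l h
    have hI : (-Complex.I : ℂ) ≠ 0 := neg_ne_zero.mpr Complex.I_ne_zero
    have h2 : ((k : ℤ) : ℂ) = ((l : ℤ) : ℂ) := mul_left_cancel₀ hI h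
    have h3 : (k : ℤ) = (l : ℤ) := by exact_mod_cast h2
    omega
  set V : Matrix (Fin (m + 1)) (Fin (m + 1)) ℂ := Matrix.transpose (Matrix.vandermonde x)
    with hVdef
  have hdet : V.det ≠ 0 := by
    rw [hVdef, Matrix.det_transpose, Matrix.det_vandermonde]
    refine Finset.prod_ne_zero_iff.mpr fun i _ => Finset.prod_ne_zero_iff.mpr fun j hj => ?_
    have hne : i ≠ j := by
      intro h; subst h; simp [Finset.mem_Ioi] at hj
    exact sub_ne_zero.mpr fun h => hne ((hxinj h).symm)
  set w : Fin (m + 1) → ℂ := (V⁻¹).mulVec (fun j : Fin (m + 1) => T (j : ℕ)) with hwdef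
  have hw : V.mulVec w = fun j : Fin (m + 1) => T (j : ℕ) := by
    rw [hwdef, Matrix.mulVec_mulVec, Matrix.mul_nonsing_inv _ (isUnit_iff_ne_zero.mpr hdet),
      Matrix.one_mulVec]
  set d : ℤ → ℂ := fun k => ∑ j : Fin (m + 1), if ((j : ℤ) = k) then w j else 0 with hddef
  set S : Finset ℤ := Finset.image (fun j : Fin (m + 1) => (j : ℤ)) Finset.univ with hSdef
  have hsupp : Function.support d ⊆ ↑S := by
    intro k hk
    simp only [Function.mem_support, hddef] at hk
    by_contra hkS
    apply hk
    apply Finset.sum_eq_zero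
    intro j _
    rw [if_neg]
    intro h
    exact hkS (by simp [hSdef, ← h])
  have hdj : ∀ j : Fin (m + 1), d ((j : ℤ)) = w j := by
    intro j
    rw [hddef]
    have hcond : ∀ j' : Fin (m + 1), (((j' : ℤ) = (j : ℤ))) = (j' = j) := by
      intro j'
      refine propext ⟨fun h => Fin.ext (by exact_mod_cast h), fun h => by rw [h]⟩
    simp only [hcond]
    simp
  refine ⟨d, (S.finite_toSet).subset hsupp, fun j hj => ?_⟩
  set jf : Fin (m + 1) := ⟨j, by omega⟩ with hjf
  rw [itd_symb d S hsupp j 0]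
  rw [Finset.sum_image (by intro p _ q _ h; exact Fin.ext (by exact_mod_cast (show ((p : ℕ) : ℤ) = ((q : ℕ) : ℤ) from h)))]
  have key : ∀ p : Fin (m + 1),
      d ((p : ℤ)) * ((-Complex.I * (((p : ℤ) : ℤ) : ℂ)) ^ j *
        Complex.exp (-Complex.I * (((p : ℤ) : ℤ) : ℂ) * 0)) = V jf p * w p := by
    intro p
    rw [hdj p]
    have hV : V jf p = x p ^ j := by
      simp [hVdef, Matrix.vandermonde, hjf]
    rw [hV, hxdef]
    simp only [mul_zero, Complex.exp_zero, mul_one]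
    ring
  rw [Finset.sum_congr rfl fun p _ => key p]
  have hfin := congrFun hw jf
  rw [Matrix.mulVec, dotProduct] at hfin
  exact hfin

theorem itd_mul_zero {f g : ℂ → ℂ} (hf : ContDiff ℂ ∞ f) (hg : ContDiff ℂ ∞ g) (n : ℕ)
    (h : ∀ k ≤ n, iteratedDeriv k f 0 = 0) :
    iteratedDeriv n (fun ξ => f ξ * g ξ) 0 = 0 := by
  rw [itd_mul hf hg n 0]
  refine Finset.sum_eq_zero fun k hk => ?_
  rw [h k (Nat.lt_succ_iff.mp (Finset.mem_range.mp hk))]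
  ring

theorem symbM_eq {r : ℕ} (a : ℤ → Fin r → Fin r → ℂ) (i ℓ : Fin r) :
    symbM a i ℓ = symb (fun k => a k i ℓ) := rfl

/-- if `v̂(2ξ)â(ξ) = ĉ(ξ)v̂(ξ) + O(|ξ|^{m+1})` and
`v̂(2ξ)â(ξ+π) = O(|ξ|^{m+1})` for some finitely supported `c` with `ĉ(0)=1`, then there is a
finitely supported `d` with `d̂(0)=1` so that `υ̂ := d̂ v̂` satisfies the order `m+1` sum rules. -/
theorem stmt10 (r m : ℕ) (a : ℤ → Fin r → Fin r → ℂ)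
    (ha : (Function.support a).Finite)
    (v : ℤ → Fin r → ℂ) (hv : (Function.support v).Finite)
    (hv0 : (fun ℓ => symb (fun k => v k ℓ) 0) ≠ 0)
    (c : ℤ → ℂ) (hc : (Function.support c).Finite) (hc0 : symb c 0 = 1)
    (h1 : ∀ j ≤ m, ∀ ℓ : Fin r,
      iteratedDeriv j
        (fun ξ : ℂ => (∑ i : Fin r, symb (fun k => v k i) (2 * ξ) * symbM a i ℓ ξ) -
          symb c ξ * symb (fun k => v k ℓ) ξ) 0 = 0)
    (h2 : ∀ j ≤ m, ∀ ℓ : Fin r,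
      iteratedDeriv j
        (fun ξ : ℂ => ∑ i : Fin r, symb (fun k => v k i) (2 * ξ) *
          symbM a i ℓ (ξ + (Real.pi : ℂ))) 0 = 0) :
    ∃ d : ℤ → ℂ, (Function.support d).Finite ∧ symb d 0 = 1 ∧
      (∀ j ≤ m, ∀ ℓ : Fin r,
        iteratedDeriv j
          (fun ξ : ℂ =>
            (∑ i : Fin r, symb d (2 * ξ) * symb (fun k => v k i) (2 * ξ) * symbM a i ℓ ξ) -
              symb d ξ * symb (fun k => v k ℓ) ξ) 0 = 0) ∧
      (∀ j ≤ m, ∀ ℓ : Fin r,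
        iteratedDeriv j
          (fun ξ : ℂ => ∑ i : Fin r, symb d (2 * ξ) * symb (fun k => v k i) (2 * ξ) *
            symbM a i ℓ (ξ + (Real.pi : ℂ))) 0 = 0) := by
  classical
  -- smoothness facts
  have hcsupp : Function.support c ⊆ ↑hc.toFinset := by simp
  have hcs : ContDiff ℂ ∞ (symb c) := contDiff_symb c hc.toFinset hcsupp
  have hvsupp : ∀ ℓ : Fin r, Function.support (fun k => v k ℓ) ⊆ ↑hv.toFinset := by
    intro ℓ k hk
    simp only [Set.Finite.coe_toFinset, Function.mem_support] at hk ⊢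
    exact fun h => hk (by simp [h])
  have hvs : ∀ ℓ : Fin r, ContDiff ℂ ∞ (symb (fun k => v k ℓ)) :=
    fun ℓ => contDiff_symb _ hv.toFinset (hvsupp ℓ)
  have hasupp : ∀ i ℓ : Fin r, Function.support (fun k => a k i ℓ) ⊆ ↑ha.toFinset := by
    intro i ℓ k hk
    simp only [Set.Finite.coe_toFinset, Function.mem_support] at hk ⊢
    exact fun h => hk (by simp [h])
  have has : ∀ i ℓ : Fin r, ContDiff ℂ ∞ (symbM a i ℓ) := by
    intro i ℓ
    rw [symbM_eq]
    exact contDiff_symb _ ha.toFinset (hasupp i ℓ)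
  have h2x : ContDiff ℂ ∞ (fun ξ : ℂ => 2 * ξ) := contDiff_const.mul contDiff_id
  have hpx : ContDiff ℂ ∞ (fun ξ : ℂ => ξ + (Real.pi : ℂ)) := contDiff_id.add contDiff_const
  have hv2s : ∀ ℓ : Fin r, ContDiff ℂ ∞ (fun ξ : ℂ => symb (fun k => v k ℓ) (2 * ξ)) :=
    fun ℓ => (hvs ℓ).comp h2x
  have hap : ∀ i ℓ : Fin r, ContDiff ℂ ∞ (fun ξ : ℂ => symbM a i ℓ (ξ + (Real.pi : ℂ))) :=
    fun i ℓ => (has i ℓ).comp hpx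
  -- derivative data of c
  set C : ℕ → ℂ := fun n => iteratedDeriv n (symb c) 0 with hCdef
  have hC0 : C 0 = 1 := by rw [hCdef]; simp [iteratedDeriv_zero, hc0]
  -- choose d with the jet of Djet C
  obtain ⟨d, hdfin, hdjet⟩ := exists_jet m (Djet C)
  have hdsupp : Function.support d ⊆ ↑hdfin.toFinset := by simp
  have hds : ContDiff ℂ ∞ (symb d) := contDiff_symb d hdfin.toFinset hdsupp
  have hd2s : ContDiff ℂ ∞ (fun ξ : ℂ => symb d (2 * ξ)) := hds.comp h2x
  have hd0 : symb d 0 = 1 := by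
    have := hdjet 0 (Nat.zero_le m)
    rwa [iteratedDeriv_zero, show Djet C 0 = 1 by simp [Djet]] at this
  -- jet of ξ ↦ symb d (2ξ)
  have hd2jet : ∀ k ≤ m, iteratedDeriv k (fun ξ : ℂ => symb d (2 * ξ)) 0 = 2 ^ k * Djet C k := by
    intro k hk
    have := congrFun (iteratedDeriv_comp_const_mul (hds.of_le (by exact_mod_cast le_top) :
      ContDiff ℂ k (symb d)) (2 : ℂ)) 0
    rw [this, mul_zero, hdjet k hk]
  -- jet of E ξ = symb d (2ξ) * symb c ξ - symb d ξ vanishes to order m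
  have hE : ∀ n ≤ m, iteratedDeriv n
      (fun ξ : ℂ => symb d (2 * ξ) * symb c ξ - symb d ξ) 0 = 0 := by
    intro n hn
    rw [itd_sub (hd2s.mul hcs) hds, itd_mul hd2s hcs n 0]
    have e : ∀ k ∈ Finset.range (n + 1),
        (n.choose k : ℂ) * (iteratedDeriv k (fun ξ : ℂ => symb d (2 * ξ)) 0 *
          iteratedDeriv (n - k) (symb c) 0) =
        (n.choose k : ℂ) * 2 ^ k * Djet C k * C (n - k) := by
      intro k hk
      rw [hd2jet k (le_trans (Nat.lt_succ_iff.mp (Finset.mem_range.mp hk)) hn)]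
      rw [hCdef]
      ring
    rw [Finset.sum_congr rfl e, Djet_spec C hC0 n, hdjet n hn, sub_self]
  refine ⟨d, hdfin, hd0, ?_, ?_⟩
  · intro j hj ℓ
    have hfun : (fun ξ : ℂ =>
        (∑ i : Fin r, symb d (2 * ξ) * symb (fun k => v k i) (2 * ξ) * symbM a i ℓ ξ) -
          symb d ξ * symb (fun k => v k ℓ) ξ) =
        fun ξ : ℂ =>
          ((∑ i : Fin r, symb (fun k => v k i) (2 * ξ) * symbM a i ℓ ξ) -
            symb c ξ * symb (fun k => v k ℓ) ξ) * symb d (2 * ξ) +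
          (symb d (2 * ξ) * symb c ξ - symb d ξ) * symb (fun k => v k ℓ) ξ := by
      funext ξ
      rw [show (∑ i : Fin r, symb d (2 * ξ) * symb (fun k => v k i) (2 * ξ) * symbM a i ℓ ξ) =
          symb d (2 * ξ) * ∑ i : Fin r, symb (fun k => v k i) (2 * ξ) * symbM a i ℓ ξ by
        rw [Finset.mul_sum]; exact Finset.sum_congr rfl fun i _ => by ring]
      ring
    rw [hfun]
    have hf1 : ContDiff ℂ ∞ (fun ξ : ℂ =>
        (∑ i : Fin r, symb (fun k => v k i) (2 * ξ) * symbM a i ℓ ξ) -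
          symb c ξ * symb (fun k => v k ℓ) ξ) :=
      (ContDiff.sum fun i _ => (hv2s i).mul (has i ℓ)).sub (hcs.mul (hvs ℓ))
    have hEs : ContDiff ℂ ∞ (fun ξ : ℂ => symb d (2 * ξ) * symb c ξ - symb d ξ) :=
      (hd2s.mul hcs).sub hds
    rw [itd_add (hf1.mul hd2s) (hEs.mul (hvs ℓ)) j 0,
      itd_mul_zero hf1 hd2s j (fun k hk => h1 k (le_trans hk hj) ℓ),
      itd_mul_zero hEs (hvs ℓ) j (fun k hk => hE k (le_trans hk hj)), add_zero]
  · intro j hj ℓ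
    have hfun : (fun ξ : ℂ => ∑ i : Fin r, symb d (2 * ξ) * symb (fun k => v k i) (2 * ξ) *
          symbM a i ℓ (ξ + (Real.pi : ℂ))) =
        fun ξ : ℂ => (∑ i : Fin r, symb (fun k => v k i) (2 * ξ) *
          symbM a i ℓ (ξ + (Real.pi : ℂ))) * symb d (2 * ξ) := by
      funext ξ
      rw [Finset.sum_mul]
      exact Finset.sum_congr rfl fun i _ => by ring
    rw [hfun]
    have hf2 : ContDiff ℂ ∞ (fun ξ : ℂ => ∑ i : Fin r, symb (fun k => v k i) (2 * ξ) *
        symbM a i ℓ (ξ + (Real.pi : ℂ))) :=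
      ContDiff.sum fun i _ => (hv2s i).mul (hap i ℓ)
    exact itd_mul_zero hf2 hd2s j (fun k hk => h2 k (le_trans hk hj) ℓ)
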